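/- Let G be a cubic graph and M1, M2 disjoint matchings with |M1 ∪ M2| maximum over all pairs of disjoint matchings of G. Then the graph G − M1 − M2 contains no cycle. -/

import Mathlib

open SimpleGraph

/-- A matching in `G` given as a set of edges: edges of `G`, pairwise vertex-disjoint. -/
def IsMatchingSet {V : Type*} (G : SimpleGraph V) (M : Set (Sym2 V)) : Prop :=
  M ⊆ G.edgeSet ∧ ∀ e ∈ M, ∀ f ∈ M, e ≠ f → ∀ v, v ∈ e → v ∉ f

/-- `M1, M2` are disjoint matchings of `G` with `|M1 ∪ M2|` maximum over all pairs of
disjoint matchings of `G`. -/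
def MaxDisjointPair {V : Type*} (G : SimpleGraph V) (M1 M2 : Set (Sym2 V)) : Prop :=
  IsMatchingSet G M1 ∧ IsMatchingSet G M2 ∧ Disjoint M1 M2 ∧
  ∀ N1 N2 : Set (Sym2 V), IsMatchingSet G N1 → IsMatchingSet G N2 → Disjoint N1 N2 →
    (N1 ∪ N2).ncard ≤ (M1 ∪ M2).ncard

/-- Adjacency in `Ĝ = G − M1 − M2`: adjacency via an edge of `G` not in `M1 ∪ M2`. -/
def hatAdj {V : Type*} (G : SimpleGraph V) (M1 M2 : Set (Sym2 V)) (x y : V) : Prop :=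
  G.Adj x y ∧ s(x, y) ∉ M1 ∪ M2


section Helpers

variable {V : Type*} {G : SimpleGraph V} {M1 M2 K : Set (Sym2 V)}

lemma edge_eq_of_two_mem {e : Sym2 V} {x y : V} (hx : x ∈ e) (hy : y ∈ e) (hxy : x ≠ y) :
    e = s(x, y) := by
  induction e with
  | _ p q =>
    rw [Sym2.mem_iff] at hx hy
    rcases hx with rfl | rfl <;> rcases hy with rfl | rfl <;> simp_all [Sym2.eq_iff]

lemma matching_eq {M : Set (Sym2 V)} (hM : IsMatchingSet G M)
    {e f : Sym2 V} {w : V} (he : e ∈ M) (hf : f ∈ M) (hwe : w ∈ e) (hwf : w ∈ f) : e = f := by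
  by_contra h
  exact hM.2 e he f hf h w hwe hwf

lemma reach_closed {H : SimpleGraph V} {S : Set V} (hS : ∀ ⦃x y⦄, H.Adj x y → x ∈ S → y ∈ S)
    {u v : V} (h : H.Reachable u v) (hu : u ∈ S) : v ∈ S := by
  obtain ⟨p⟩ := h
  induction p with
  | nil => exact hu
  | cons hadj q ih => exact ih (hS hadj hu)

lemma isolated_reach {H : SimpleGraph V} {u v : V} (h : ∀ y, ¬ H.Adj u y)
    (hr : H.Reachable u v) : u = v := by
  obtain ⟨p⟩ := hr
  cases p with
  | nil => rfl
  | cons hadj q => exact absurd hadj (h _)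

lemma path_internal {H : SimpleGraph V} {u v : V} (p : H.Walk u v) (hp : p.IsPath) :
    ∀ w ∈ p.support, w ≠ u → w ≠ v →
      ∃ y z, y ≠ z ∧ y ∈ p.support ∧ z ∈ p.support ∧ H.Adj w y ∧ H.Adj w z := by
  induction p with
  | nil => intro w hw hwu hwv; simp at hw; exact absurd hw hwu
  | @cons a b c hadj q ih =>
    intro w hw hwu hwv
    rw [Walk.support_cons, List.mem_cons] at hw
    rcases hw with rfl | hw
    · exact absurd rfl hwu
    · have hq : q.IsPath := hp.of_cons
      by_cases hwb : w = b
      · subst hwb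
        cases q with
        | nil => exact absurd rfl hwv
        | @cons b' c' d' hadj' q' =>
          refine ⟨a, c', ?_, ?_, ?_, hadj.symm, hadj'⟩
          · rintro rfl
            have hnd := hp.support_nodup
            simp [Walk.support_cons] at hnd
          · simp [Walk.support_cons]
          · simp [Walk.support_cons]
      · obtain ⟨y, z, h1, h2, h3, h4, h5⟩ := ih hq w hw hwb hwv
        exact ⟨y, z, h1, by simp [Walk.support_cons, h2], by simp [Walk.support_cons, h3], h4, h5⟩

lemma start_closed {H : SimpleGraph V} {u v : V} (p : H.Walk u v) (huv : u ≠ v)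
    (hu : ∀ y z, H.Adj u y → H.Adj u z → y = z) :
    ∀ y, H.Adj u y → y ∈ p.support := by
  intro y hy
  cases p with
  | nil => exact absurd rfl huv
  | @cons a b c hadj q =>
    have : y = b := hu y b hy hadj
    subst this
    simp [Walk.support_cons]

lemma support_closed {H : SimpleGraph V} {u v : V} (p : H.Walk u v) (hp : p.IsPath)
    (huv : u ≠ v)
    (hu : ∀ y z, H.Adj u y → H.Adj u z → y = z)
    (hv : ∀ y z, H.Adj v y → H.Adj v z → y = z)
    (hmax : ∀ w y1 y2 y3, H.Adj w y1 → H.Adj w y2 → H.Adj w y3 → y1 = y2 ∨ y1 = y3 ∨ y2 = y3) :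
    ∀ w ∈ p.support, ∀ y, H.Adj w y → y ∈ p.support := by
  intro w hw y hy
  by_cases hwu : w = u
  · subst hwu; exact start_closed p huv hu y hy
  by_cases hwv : w = v
  · subst hwv
    have := start_closed p.reverse (Ne.symm huv) hv y hy
    rwa [Walk.support_reverse, List.mem_reverse] at this
  obtain ⟨y1, y2, h1, h2, h3, h4, h5⟩ := path_internal p hp w hw hwu hwv
  rcases hmax w y y1 y2 hy h4 h5 with rfl | rfl | h
  · exact h2
  · exact h3
  · exact absurd h h1

lemma cyc_triple {H : SimpleGraph V} {a : V} {c : H.Walk a a} (hc : c.IsCycle) :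
    ∃ y z, y ≠ z ∧ H.Adj a y ∧ H.Adj a z ∧ y ∈ c.support ∧ z ∈ c.support := by
  cases c with
  | nil => exact absurd hc Walk.IsCycle.not_of_nil
  | @cons a b c' hadj q =>
    cases hq : q.reverse with
    | nil => exact absurd hadj (H.loopless.irrefl a)
    | @cons _ d _ hadj' q' =>
      have hdsup : d ∈ q.support := by
        have h2 : d ∈ q.reverse.support := by
          rw [hq, Walk.support_cons]
          exact List.mem_cons_of_mem _ q'.start_mem_support
        rwa [Walk.support_reverse, List.mem_reverse] at h2
      refine ⟨b, d, ?_, hadj, hadj', ?_, ?_⟩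
      · rintro rfl
        have hmem : s(a, b) ∈ q.edges := by
          have : s(a, b) ∈ q.reverse.edges := by rw [hq]; simp [Sym2.eq_swap]
          rwa [Walk.edges_reverse, List.mem_reverse] at this
        have hnd := hc.isCircuit.isTrail.edges_nodup
        rw [Walk.edges_cons] at hnd
        exact (List.nodup_cons.mp hnd).1 hmem
      · rw [Walk.support_cons]
        exact List.mem_cons_of_mem _ q.start_mem_support
      · rw [Walk.support_cons]
        exact List.mem_cons_of_mem _ hdsup

lemma atMostOneB {V : Type*} [Fintype V] {G : SimpleGraph V} [DecidableRel G.Adj] {w : V}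
    (hdeg : G.degree w = 3) {B : Set (Sym2 V)} (hB : B ⊆ G.edgeSet)
    {x y : V} (hxy : x ≠ y) (hx : G.Adj w x) (hy : G.Adj w y)
    (hfx : s(w, x) ∉ B) (hfy : s(w, y) ∉ B)
    {e f : Sym2 V} (he : e ∈ B) (hf : f ∈ B) (hwe : w ∈ e) (hwf : w ∈ f) : e = f := by
  classical
  by_contra hef
  have hinc : ∀ g ∈ B, w ∈ g → g ∈ G.incidenceFinset w := by
    intro g hg hwg
    rw [mem_incidenceFinset]
    exact ⟨hB hg, hwg⟩
  have hxinc : s(w, x) ∈ G.incidenceFinset w := by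
    rw [mem_incidenceFinset]; exact ⟨hx, Sym2.mem_mk_left _ _⟩
  have hyinc : s(w, y) ∈ G.incidenceFinset w := by
    rw [mem_incidenceFinset]; exact ⟨hy, Sym2.mem_mk_left _ _⟩
  have hsub : ({s(w, x), s(w, y), e, f} : Finset (Sym2 V)) ⊆ G.incidenceFinset w := by
    intro g hg
    simp only [Finset.mem_insert, Finset.mem_singleton] at hg
    rcases hg with rfl | rfl | rfl | rfl
    · exact hxinc
    · exact hyinc
    · exact hinc _ he hwe
    · exact hinc _ hf hwf
  have hcard : ({s(w, x), s(w, y), e, f} : Finset (Sym2 V)).card = 4 := by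
    have h1 : s(w, x) ≠ s(w, y) := by
      intro h
      rw [Sym2.eq_iff] at h
      rcases h with ⟨-, rfl⟩ | ⟨rfl, rfl⟩ <;> exact hxy rfl
    have h2 : s(w, x) ≠ e := fun h => hfx (h ▸ he)
    have h3 : s(w, x) ≠ f := fun h => hfx (h ▸ hf)
    have h4 : s(w, y) ≠ e := fun h => hfy (h ▸ he)
    have h5 : s(w, y) ≠ f := fun h => hfy (h ▸ hf)
    rw [Finset.card_insert_of_notMem (by simp [h1, h2, h3]),
        Finset.card_insert_of_notMem (by simp [h4, h5]),
        Finset.card_insert_of_notMem (by simp [hef]),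
        Finset.card_singleton]
  have := Finset.card_le_card hsub
  rw [hcard, card_incidenceFinset_eq_degree, hdeg] at this
  omega

lemma maxpair_symm (hmax : MaxDisjointPair G M1 M2) : MaxDisjointPair G M2 M1 := by
  obtain ⟨h1, h2, hd, hm⟩ := hmax
  refine ⟨h2, h1, hd.symm, fun N1 N2 hN1 hN2 hdN => ?_⟩
  rw [Set.union_comm M2 M1]
  exact hm N1 N2 hN1 hN2 hdN

lemma insert_matching (hM : IsMatchingSet G M1) {u v : V} (ha : G.Adj u v)
    (hu : ∀ e ∈ M1, u ∉ e) (hv : ∀ e ∈ M1, v ∉ e) : IsMatchingSet G (insert s(u, v) M1) := by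
  constructor
  · exact Set.insert_subset (G.mem_edgeSet.mpr ha) hM.1
  · intro e he f hf hne x hxe
    rcases Set.mem_insert_iff.mp he with rfl | he'
    · rcases Set.mem_insert_iff.mp hf with rfl | hf'
      · exact absurd rfl hne
      · rcases Sym2.mem_iff.mp hxe with rfl | rfl
        · exact hu f hf'
        · exact hv f hf'
    · rcases Set.mem_insert_iff.mp hf with rfl | hf'
      · intro hxf
        rcases Sym2.mem_iff.mp hxf with rfl | rfl
        · exact hu e he' hxe
        · exact hv e he' hxe
      · exact hM.2 e he' f hf' hne x hxe

lemma aug_one [Fintype V] (hmax : MaxDisjointPair G M1 M2) {u v : V} (ha : G.Adj u v)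
    (hfree : s(u, v) ∉ M1 ∪ M2) (hu : ∀ e ∈ M1, u ∉ e) (hv : ∀ e ∈ M1, v ∉ e) : False := by
  have hN1 : IsMatchingSet G (insert s(u, v) M1) := insert_matching hmax.1 ha hu hv
  have hdisj : Disjoint (insert s(u, v) M1) M2 := by
    rw [Set.disjoint_left]
    intro x hx hx2
    rcases Set.mem_insert_iff.mp hx with rfl | hx
    · exact hfree (Set.mem_union_right _ hx2)
    · exact Set.disjoint_left.mp hmax.2.2.1 hx hx2
  have hle := hmax.2.2.2 (insert s(u, v) M1) M2 hN1 hmax.2.1 hdisj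
  rw [Set.insert_union, Set.ncard_insert_of_notMem hfree (Set.toFinite _)] at hle
  omega

lemma swap_matching (h1 : IsMatchingSet G M1) (h2 : IsMatchingSet G M2)
    (hcross : ∀ e ∈ K, ∀ f ∈ M1 ∪ M2, f ∉ K → ∀ x ∈ e, x ∉ f) :
    IsMatchingSet G ((M1 \ K) ∪ (M2 ∩ K)) := by
  constructor
  · intro e he
    rcases he with he | he
    · exact h1.1 he.1
    · exact h2.1 he.1
  · intro e he f hf hne x hxe
    rcases he with he | he <;> rcases hf with hf | hf
    · exact h1.2 e he.1 f hf.1 hne x hxe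
    · intro hxf
      exact hcross f hf.2 e (Or.inl he.1) he.2 x hxf hxe
    · exact fun hxf => hcross e he.2 f (Or.inl hf.1) hf.2 x hxe hxf
    · exact h2.2 e he.1 f hf.1 hne x hxe

lemma swap_disjoint (hd : Disjoint M1 M2) :
    Disjoint ((M1 \ K) ∪ (M2 ∩ K)) ((M2 \ K) ∪ (M1 ∩ K)) := by
  rw [Set.disjoint_left]
  rintro e (he | he) (hf | hf)
  · exact Set.disjoint_left.mp hd he.1 hf.1
  · exact he.2 hf.2
  · exact hf.2 he.2
  · exact Set.disjoint_left.mp hd hf.1 he.1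

lemma swap_union : ((M1 \ K) ∪ (M2 ∩ K)) ∪ ((M2 \ K) ∪ (M1 ∩ K)) = M1 ∪ M2 := by
  ext e
  by_cases h : e ∈ K <;> simp [Set.mem_union, Set.mem_diff, Set.mem_inter_iff, h] <;> tauto

def Kset {V : Type*} (B0 : Set (Sym2 V)) (S : Set V) : Set (Sym2 V) :=
  {e ∈ B0 | ∃ x, x ∈ e ∧ x ∈ S}

lemma K_endpoints {B0 : Set (Sym2 V)} {S : Set V}
    (hS : ∀ x y, x ≠ y → s(x, y) ∈ B0 → x ∈ S → y ∈ S) :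
    ∀ e ∈ Kset B0 S, ∀ y ∈ e, y ∈ S := by
  rintro e ⟨heB, x, hxe, hxS⟩ y hye
  by_cases hxy : x = y
  · exact hxy ▸ hxS
  · exact hS x y hxy ((edge_eq_of_two_mem hxe hye hxy) ▸ heB) hxS

lemma K_cross {B0 : Set (Sym2 V)} {S : Set V}
    (hS : ∀ x y, x ≠ y → s(x, y) ∈ B0 → x ∈ S → y ∈ S) :
    ∀ e ∈ Kset B0 S, ∀ f ∈ B0, f ∉ Kset B0 S → ∀ x ∈ e, x ∉ f :=
  fun e he f hf hfK x hxe hxf => hfK ⟨hf, x, hxf, K_endpoints hS e he x hxe⟩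

end Helpers

section Main
variable {V : Type*} {G : SimpleGraph V} {M1 M2 : Set (Sym2 V)}

/-- Lemma L: forced reachability in `M1 ∪ M2`. -/
lemma reach_of_max [Fintype V] (hmax : MaxDisjointPair G M1 M2) {u v : V} (ha : G.Adj u v)
    (hfree : s(u, v) ∉ M1 ∪ M2) {eu fv : Sym2 V}
    (heu : eu ∈ M1) (hueu : u ∈ eu) (hfv : fv ∈ M2) (hvfv : v ∈ fv)
    (huB : ∀ e ∈ M1 ∪ M2, u ∈ e → e = eu) (hvB : ∀ e ∈ M1 ∪ M2, v ∈ e → e = fv) :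
    (SimpleGraph.fromEdgeSet (M1 ∪ M2)).Reachable u v := by
  classical
  by_contra hR
  set S : Set V := {w | (SimpleGraph.fromEdgeSet (M1 ∪ M2)).Reachable u w} with hSdef
  have hS : ∀ x y, x ≠ y → s(x, y) ∈ M1 ∪ M2 → x ∈ S → y ∈ S := by
    intro x y hxy hmem hxS
    exact hxS.trans (SimpleGraph.Adj.reachable ((SimpleGraph.fromEdgeSet_adj _).mpr ⟨hmem, hxy⟩))
  set K := Kset (M1 ∪ M2) S with hK
  have hKe := K_endpoints hS
  have hKc := K_cross hS
  have huS : u ∈ S := Reachable.refl u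
  have hbase1 : IsMatchingSet G ((M1 \ K) ∪ (M2 ∩ K)) :=
    swap_matching hmax.1 hmax.2.1 hKc
  have hu' : ∀ e ∈ (M1 \ K) ∪ (M2 ∩ K), u ∉ e := by
    rintro e (he | he) hue
    · exact he.2 ⟨Or.inl he.1, u, hue, huS⟩
    · have : e = eu := huB e (Or.inr he.1) hue
      exact Set.disjoint_left.mp hmax.2.2.1 (this ▸ heu) he.1
  have hv' : ∀ e ∈ (M1 \ K) ∪ (M2 ∩ K), v ∉ e := by
    rintro e (he | he) hve
    · have : e = fv := hvB e (Or.inl he.1) hve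
      exact Set.disjoint_left.mp hmax.2.2.1 he.1 (this ▸ hfv)
    · exact hR (hKe e he.2 v hve)
  have hN1 : IsMatchingSet G (insert s(u, v) ((M1 \ K) ∪ (M2 ∩ K))) :=
    insert_matching hbase1 ha hu' hv'
  have hN2 : IsMatchingSet G ((M2 \ K) ∪ (M1 ∩ K)) := by
    refine swap_matching hmax.2.1 hmax.1 ?_
    intro e he f hf hfK x hxe
    exact hKc e he f (by rwa [Set.union_comm]) hfK x hxe
  have hd : Disjoint (insert s(u, v) ((M1 \ K) ∪ (M2 ∩ K))) ((M2 \ K) ∪ (M1 ∩ K)) := by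
    rw [Set.insert_eq, Set.disjoint_union_left]
    constructor
    · rw [Set.disjoint_singleton_left]
      rintro (he | he)
      · exact hfree (Or.inr he.1)
      · exact hfree (Or.inl he.1)
    · exact swap_disjoint hmax.2.2.1
  have hle := hmax.2.2.2 _ _ hN1 hN2 hd
  rw [Set.insert_union, swap_union,
    Set.ncard_insert_of_notMem hfree (Set.toFinite _)] at hle
  omega

lemma mega [Fintype V] (hmax : MaxDisjointPair G M1 M2) {v1 v2 v3 : V}
    (hne13 : v1 ≠ v3) (ha : G.Adj v2 v1) (hb : G.Adj v2 v3)
    (hafree : s(v2, v1) ∉ M1 ∪ M2) (hbfree : s(v2, v3) ∉ M1 ∪ M2)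
    {e2 f1 f3 : Sym2 V} (he2 : e2 ∈ M1) (hv2e2 : v2 ∈ e2)
    (hf1 : f1 ∈ M2) (hv1f1 : v1 ∈ f1) (hf3 : f3 ∈ M2) (hv3f3 : v3 ∈ f3)
    (hv2B : ∀ e ∈ M1 ∪ M2, v2 ∈ e → e = e2)
    (hv1B : ∀ e ∈ M1 ∪ M2, v1 ∈ e → e = f1)
    (hv3B : ∀ e ∈ M1 ∪ M2, v3 ∈ e → e = f3) : False := by
  classical
  have hdisj := hmax.2.2.1
  have he2M2 : e2 ∉ M2 := fun h => Set.disjoint_left.mp hdisj he2 h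
  have hf1M1 : f1 ∉ M1 := fun h => Set.disjoint_left.mp hdisj h hf1
  have hf3M1 : f3 ∉ M1 := fun h => Set.disjoint_left.mp hdisj h hf3
  have hf1e2 : f1 ≠ e2 := fun h => he2M2 (h ▸ hf1)
  have hf3e2 : f3 ≠ e2 := fun h => he2M2 (h ▸ hf3)
  set M1' : Set (Sym2 V) := M1 \ {e2} with hM1'def
  have hM1sub : M1' ⊆ M1 := Set.diff_subset
  have hM1' : IsMatchingSet G M1' :=
    ⟨fun e he => hmax.1.1 (hM1sub he),
     fun e he f hf hne x hxe => hmax.1.2 e (hM1sub he) f (hM1sub hf) hne x hxe⟩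
  have hd' : Disjoint M1' M2 := hdisj.mono_left hM1sub
  have hBsub : M1' ∪ M2 ⊆ M1 ∪ M2 := Set.union_subset_union_left M2 hM1sub
  have hB'mem : ∀ {e : Sym2 V}, e ∈ M1 ∪ M2 → e ≠ e2 → e ∈ M1' ∪ M2 := by
    rintro e (he | he) hne
    · exact Or.inl ⟨he, hne⟩
    · exact Or.inr he
  have hv1v2 : v1 ≠ v2 := ha.ne.symm
  have hv3v2 : v3 ≠ v2 := hb.ne.symm
  -- the other endpoint of e2
  obtain ⟨x, hx⟩ := Sym2.mem_iff_exists.mp hv2e2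
  have hxv2 : x ≠ v2 := by
    rintro rfl
    exact G.not_isDiag_of_mem_edgeSet (hmax.1.1 he2) (hx ▸ Sym2.mk_isDiag_iff.mpr rfl)
  have hxe2 : x ∈ e2 := hx ▸ Sym2.mem_mk_right _ _
  have hxv1 : x ≠ v1 := by
    rintro rfl
    exact hafree (hx ▸ Or.inl he2)
  have hxv3 : x ≠ v3 := by
    rintro rfl
    exact hbfree (hx ▸ Or.inl he2)
  set GB' := SimpleGraph.fromEdgeSet (M1' ∪ M2) with hGB'
  set T : Set V := {w | GB'.Reachable v1 w} with hTdef
  have hT : ∀ x' y, x' ≠ y → s(x', y) ∈ M1' ∪ M2 → x' ∈ T → y ∈ T := by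
    intro x' y hxy hmem hxT
    exact hxT.trans (SimpleGraph.Adj.reachable ((SimpleGraph.fromEdgeSet_adj _).mpr ⟨hmem, hxy⟩))
  have hKe := K_endpoints hT
  have hKc := K_cross hT
  have hv2iso : ∀ y, ¬ GB'.Adj v2 y := by
    intro y hy
    rw [hGB', SimpleGraph.fromEdgeSet_adj] at hy
    have := hv2B _ (hBsub hy.1) (Sym2.mem_mk_left _ _)
    rcases hy.1 with h | h
    · exact h.2 this
    · exact he2M2 (this ▸ h)
  have hv2T : v2 ∉ T := by
    intro hmem
    exact hv1v2 ((isolated_reach hv2iso (Reachable.symm hmem)).symm)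
  have hv1T : v1 ∈ T := Reachable.refl v1
  have hf1B' : f1 ∈ M1' ∪ M2 := Or.inr hf1
  have hf3B' : f3 ∈ M1' ∪ M2 := Or.inr hf3
  have hf1K : f1 ∈ Kset (M1' ∪ M2) T := ⟨hf1B', v1, hv1f1, hv1T⟩
  by_cases hv3T : v3 ∈ T
  · -- BAD case
    have hRL : (SimpleGraph.fromEdgeSet (M1 ∪ M2)).Reachable v2 v1 :=
      reach_of_max hmax ha hafree he2 hv2e2 hf1 hv1f1 hv2B hv1B
    by_cases hxT : x ∈ T
    · -- three leaves
      have huniq1 : ∀ y z, GB'.Adj v1 y → GB'.Adj v1 z → y = z := by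
        intro y z hy hz
        rw [hGB', SimpleGraph.fromEdgeSet_adj] at hy hz
        have h1 := hv1B _ (hBsub hy.1) (Sym2.mem_mk_left _ _)
        have h2 := hv1B _ (hBsub hz.1) (Sym2.mem_mk_left _ _)
        exact Sym2.congr_right.mp (h1.trans h2.symm)
      have huniq3 : ∀ y z, GB'.Adj v3 y → GB'.Adj v3 z → y = z := by
        intro y z hy hz
        rw [hGB', SimpleGraph.fromEdgeSet_adj] at hy hz
        have h1 := hv3B _ (hBsub hy.1) (Sym2.mem_mk_left _ _)
        have h2 := hv3B _ (hBsub hz.1) (Sym2.mem_mk_left _ _)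
        exact Sym2.congr_right.mp (h1.trans h2.symm)
      have hxM2 : ∀ {y : V}, s(x, y) ∈ M1' ∪ M2 → s(x, y) ∈ M2 := by
        rintro y (h | h)
        · exact absurd (matching_eq hmax.1 h.1 he2 (Sym2.mem_mk_left _ _) hxe2) h.2
        · exact h
      have huniqx : ∀ y z, GB'.Adj x y → GB'.Adj x z → y = z := by
        intro y z hy hz
        rw [hGB', SimpleGraph.fromEdgeSet_adj] at hy hz
        exact Sym2.congr_right.mp (matching_eq hmax.2.1 (hxM2 hy.1) (hxM2 hz.1)
          (Sym2.mem_mk_left _ _) (Sym2.mem_mk_left _ _))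
      have hpig : ∀ {M : Set (Sym2 V)}, IsMatchingSet G M → ∀ {w p q : V},
          s(w, p) ∈ M → s(w, q) ∈ M → p = q := by
        intro M hM w p q hp hq
        exact Sym2.congr_right.mp
          (matching_eq hM hp hq (Sym2.mem_mk_left _ _) (Sym2.mem_mk_left _ _))
      have hmaxdeg : ∀ w y1 y2 y3, GB'.Adj w y1 → GB'.Adj w y2 → GB'.Adj w y3 →
          y1 = y2 ∨ y1 = y3 ∨ y2 = y3 := by
        intro w y1 y2 y3 h1 h2 h3
        rw [hGB', SimpleGraph.fromEdgeSet_adj] at h1 h2 h3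
        rcases h1.1 with a1 | a1 <;> rcases h2.1 with a2 | a2 <;> rcases h3.1 with a3 | a3
        · exact Or.inl (hpig hmax.1 a1.1 a2.1)
        · exact Or.inl (hpig hmax.1 a1.1 a2.1)
        · exact Or.inr (Or.inl (hpig hmax.1 a1.1 a3.1))
        · exact Or.inr (Or.inr (hpig hmax.2.1 a2 a3))
        · exact Or.inr (Or.inr (hpig hmax.1 a2.1 a3.1))
        · exact Or.inr (Or.inl (hpig hmax.2.1 a1 a3))
        · exact Or.inl (hpig hmax.2.1 a1 a2)
        · exact Or.inl (hpig hmax.2.1 a1 a2)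
      obtain ⟨p0⟩ := (hxT : GB'.Reachable v1 x)
      have hsc := support_closed p0.toPath.1 p0.toPath.2 hxv1.symm huniq1 huniqx hmaxdeg
      have hv3supp : v3 ∈ p0.toPath.1.support := by
        refine reach_closed (S := {w | w ∈ p0.toPath.1.support})
          (fun w y hadj hw => hsc w hw y hadj) (hv3T : GB'.Reachable v1 v3) ?_
        exact p0.toPath.1.start_mem_support
      obtain ⟨y, z, hyz, -, -, hadjy, hadjz⟩ :=
        path_internal p0.toPath.1 p0.toPath.2 v3 hv3supp hne13.symm hxv3.symm
      exact hyz (huniq3 y z hadjy hadjz)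
    · -- x ∉ T
      have hTGB : ∀ ⦃w y : V⦄, (SimpleGraph.fromEdgeSet (M1 ∪ M2)).Adj w y → w ∈ T → y ∈ T := by
        intro w y hadj hw
        rw [SimpleGraph.fromEdgeSet_adj] at hadj
        by_cases hcase : s(w, y) = e2
        · rw [hx, Sym2.eq_iff] at hcase
          rcases hcase with ⟨rfl, rfl⟩ | ⟨rfl, rfl⟩
          · exact absurd hw hv2T
          · exact absurd hw hxT
        · exact hT w y hadj.2 (hB'mem hadj.1 hcase) hw
      exact hv2T (reach_closed hTGB hRL.symm hv1T)
  · -- GOOD case: augment by two edges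
    set K := Kset (M1' ∪ M2) T with hKdef
    have hf3K : f3 ∉ K := fun h => hv3T (hKe f3 h v3 hv3f3)
    have hbase1 : IsMatchingSet G ((M1' \ K) ∪ (M2 ∩ K)) := swap_matching hM1' hmax.2.1 hKc
    have hbase2 : IsMatchingSet G ((M2 \ K) ∪ (M1' ∩ K)) := by
      refine swap_matching hmax.2.1 hM1' ?_
      intro e he f hf hfK x' hx'
      exact hKc e he f (by rwa [Set.union_comm]) hfK x' hx'
    have hN1 : IsMatchingSet G (insert s(v2, v3) ((M1' \ K) ∪ (M2 ∩ K))) := by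
      refine insert_matching hbase1 hb ?_ ?_
      · rintro e (he | he) hve
        · exact he.1.2 (hv2B e (Or.inl he.1.1) hve)
        · exact he2M2 ((hv2B e (Or.inr he.1) hve) ▸ he.1)
      · rintro e (he | he) hve
        · exact hf3M1 ((hv3B e (Or.inl he.1.1) hve) ▸ he.1.1)
        · exact hf3K ((hv3B e (Or.inr he.1) hve) ▸ he.2)
    have hN2 : IsMatchingSet G (insert s(v2, v1) ((M2 \ K) ∪ (M1' ∩ K))) := by
      refine insert_matching hbase2 ha ?_ ?_
      · rintro e (he | he) hve
        · exact he2M2 ((hv2B e (Or.inr he.1) hve) ▸ he.1)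
        · exact he.1.2 (hv2B e (Or.inl he.1.1) hve)
      · rintro e (he | he) hve
        · exact he.2 ((hv1B e (Or.inr he.1) hve) ▸ hf1K)
        · exact hf1M1 ((hv1B e (Or.inl he.1.1) hve) ▸ he.1.1)
    have hab : s(v2, v3) ≠ s(v2, v1) := fun h => hne13 (Sym2.congr_right.mp h).symm
    have hdN : Disjoint (insert s(v2, v3) ((M1' \ K) ∪ (M2 ∩ K)))
        (insert s(v2, v1) ((M2 \ K) ∪ (M1' ∩ K))) := by
      rw [Set.disjoint_left]
      rintro e he hf
      rcases Set.mem_insert_iff.mp he with rfl | he'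
      · rcases Set.mem_insert_iff.mp hf with h | hf'
        · exact hab h
        · rcases hf' with h | h
          · exact hbfree (Or.inr h.1)
          · exact hbfree (Or.inl (hM1sub h.1))
      · rcases Set.mem_insert_iff.mp hf with rfl | hf'
        · rcases he' with h | h
          · exact hafree (Or.inl (hM1sub h.1))
          · exact hafree (Or.inr h.1)
        · exact Set.disjoint_left.mp (swap_disjoint hd') he' hf'
    have hle := hmax.2.2.2 _ _ hN1 hN2 hdN
    have hUeq : insert s(v2, v3) ((M1' \ K) ∪ (M2 ∩ K)) ∪
        insert s(v2, v1) ((M2 \ K) ∪ (M1' ∩ K)) =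
        insert s(v2, v3) (insert s(v2, v1) (M1' ∪ M2)) := by
      rw [Set.insert_union, Set.union_insert, swap_union]
    rw [hUeq] at hle
    have hbni : s(v2, v3) ∉ insert s(v2, v1) (M1' ∪ M2) := by
      rintro (h | h)
      · exact hab h
      · exact hbfree (hBsub h)
    have hani : s(v2, v1) ∉ M1' ∪ M2 := fun h => hafree (hBsub h)
    rw [Set.ncard_insert_of_notMem hbni (Set.toFinite _),
        Set.ncard_insert_of_notMem hani (Set.toFinite _)] at hle
    have he2ni : e2 ∉ M1' ∪ M2 := by
      rintro (h | h)
      · exact h.2 rfl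
      · exact he2M2 h
    have hBeq : insert e2 (M1' ∪ M2) = M1 ∪ M2 := by
      ext g
      simp only [Set.mem_insert_iff, Set.mem_union, hM1'def, Set.mem_diff,
        Set.mem_singleton_iff]
      constructor
      · rintro (rfl | ⟨h, -⟩ | h)
        · exact Or.inl he2
        · exact Or.inl h
        · exact Or.inr h
      · rintro (h | h)
        · by_cases hg : g = e2
          · exact Or.inl hg
          · exact Or.inr (Or.inl ⟨h, hg⟩)
        · exact Or.inr (Or.inr h)
    have hcard : (M1 ∪ M2).ncard = (M1' ∪ M2).ncard + 1 := by
      rw [← hBeq, Set.ncard_insert_of_notMem he2ni (Set.toFinite _)]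
    omega

end Main

theorem stmt4 {V : Type*} [Fintype V] (G : SimpleGraph V) [DecidableRel G.Adj]
    (hcubic : ∀ v : V, G.degree v = 3) (M1 M2 : Set (Sym2 V))
    (hmax : MaxDisjointPair G M1 M2) :
    (G.deleteEdges (M1 ∪ M2)).IsAcyclic := by
  classical
  intro v c hc
  have hdisj := hmax.2.2.1
  have hBsub : M1 ∪ M2 ⊆ G.edgeSet := Set.union_subset hmax.1.1 hmax.2.1.1
  have hadj : ∀ {x y : V}, (G.deleteEdges (M1 ∪ M2)).Adj x y →
      G.Adj x y ∧ s(x, y) ∉ M1 ∪ M2 := by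
    intro x y h
    rwa [SimpleGraph.deleteEdges_adj] at h
  obtain ⟨p1, p3, h13, hA1, hA3, hs1, hs3⟩ := cyc_triple hc
  have htwo : ∀ w ∈ c.support, ∃ y z, y ≠ z ∧
      (G.deleteEdges (M1 ∪ M2)).Adj w y ∧ (G.deleteEdges (M1 ∪ M2)).Adj w z := by
    intro w hw
    obtain ⟨y, z, hyz, hy, hz, -, -⟩ := cyc_triple (hc.rotate hw)
    exact ⟨y, z, hyz, hy, hz⟩
  have hone : ∀ w ∈ c.support, ∀ e ∈ M1 ∪ M2, ∀ f ∈ M1 ∪ M2, w ∈ e → w ∈ f → e = f := by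
    intro w hw e he f hf hwe hwf
    obtain ⟨y, z, hyz, hy, hz⟩ := htwo w hw
    obtain ⟨hy1, hy2⟩ := hadj hy
    obtain ⟨hz1, hz2⟩ := hadj hz
    exact atMostOneB (hcubic w) hBsub hyz hy1 hz1 hy2 hz2 he hf hwe hwf
  have hvs : v ∈ c.support := c.start_mem_support
  have hG1 := (hadj hA1).1
  have hG3 := (hadj hA3).1
  have hF1 := (hadj hA1).2
  have hF3 := (hadj hA3).2
  have hnb : ∀ w ∈ c.support, (∃ e ∈ M1, w ∈ e) → (∃ e ∈ M2, w ∈ e) → False := by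
    rintro w hw ⟨e, he, hwe⟩ ⟨f, hf, hwf⟩
    have := hone w hw e (Or.inl he) f (Or.inr hf) hwe hwf
    exact Set.disjoint_left.mp hdisj he (this ▸ hf)
  have hOr1a : (∃ e ∈ M1, v ∈ e) ∨ (∃ e ∈ M1, p1 ∈ e) := by
    by_contra h
    push_neg at h
    exact aug_one hmax hG1 hF1 h.1 h.2
  have hOr1b : (∃ e ∈ M1, v ∈ e) ∨ (∃ e ∈ M1, p3 ∈ e) := by
    by_contra h
    push_neg at h
    exact aug_one hmax hG3 hF3 h.1 h.2
  have hOr2a : (∃ e ∈ M2, v ∈ e) ∨ (∃ e ∈ M2, p1 ∈ e) := by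
    by_contra h
    push_neg at h
    exact aug_one (maxpair_symm hmax) hG1 (by rwa [Set.union_comm]) h.1 h.2
  have hOr2b : (∃ e ∈ M2, v ∈ e) ∨ (∃ e ∈ M2, p3 ∈ e) := by
    by_contra h
    push_neg at h
    exact aug_one (maxpair_symm hmax) hG3 (by rwa [Set.union_comm]) h.1 h.2
  by_cases hc1 : ∃ e ∈ M1, v ∈ e
  · obtain ⟨e2, he2, hve2⟩ := hc1
    have hnc2 : ¬ ∃ e ∈ M2, v ∈ e := fun h => hnb v hvs ⟨e2, he2, hve2⟩ h
    have hcov1 : ∃ e ∈ M2, p1 ∈ e := hOr2a.resolve_left hnc2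
    have hcov3 : ∃ e ∈ M2, p3 ∈ e := hOr2b.resolve_left hnc2
    obtain ⟨f1, hf1, hp1f1⟩ := hcov1
    obtain ⟨f3, hf3, hp3f3⟩ := hcov3
    exact mega hmax h13 hG1 hG3 hF1 hF3 he2 hve2 hf1 hp1f1 hf3 hp3f3
      (fun e he hve => hone v hvs e he e2 (Or.inl he2) hve hve2)
      (fun e he hve => hone p1 hs1 e he f1 (Or.inr hf1) hve hp1f1)
      (fun e he hve => hone p3 hs3 e he f3 (Or.inr hf3) hve hp3f3)
  · have hcov2 : ∃ e ∈ M2, v ∈ e := by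
      rcases hOr2a with h | h
      · exact h
      · rcases hOr1a with h1 | h1
        · exact absurd h1 hc1
        · exact absurd (hnb p1 hs1 h1 h) id
    obtain ⟨e2, he2, hve2⟩ := hcov2
    have hcov1 : ∃ e ∈ M1, p1 ∈ e := hOr1a.resolve_left hc1
    have hcov3 : ∃ e ∈ M1, p3 ∈ e := hOr1b.resolve_left hc1
    obtain ⟨f1, hf1, hp1f1⟩ := hcov1
    obtain ⟨f3, hf3, hp3f3⟩ := hcov3
    exact mega (maxpair_symm hmax) h13 hG1 hG3 (by rwa [Set.union_comm])
      (by rwa [Set.union_comm]) he2 hve2 hf1 hp1f1 hf3 hp3f3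
      (fun e he hve => hone v hvs e (by rwa [Set.union_comm] at he) e2 (Or.inr he2) hve hve2)
      (fun e he hve => hone p1 hs1 e (by rwa [Set.union_comm] at he) f1 (Or.inl hf1) hve hp1f1)
      (fun e he hve => hone p3 hs3 e (by rwa [Set.union_comm] at he) f3 (Or.inl hf3) hve hp3f3)
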